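/- For every n ∈ ℕ with n ≥ 1, every (a_j)_{1≤j≤n} ∈ ℂ^n and every (γ_{j,k})_{1≤j<k≤n} ∈ ℝ^{n(n−1)/2}: inf over v ∈ ℂ^{2^n} with ‖v‖ = 1 of ‖M_n((a_j)_{1≤j≤n},(γ_{j,k})_{1≤j<k≤n})·v‖² is at least (1 − [n ≥ 2]·(1/2)·max_{m∈{1,…,n}}(Σ_{j=1}^{m−1}|1 + e^{iγ_{j,m}}| + Σ_{j=m+1}^{n}|1 + e^{iγ_{m,j}}|)) · Σ_{j=1}^{n}|a_j|², where [n ≥ 2] is 1 if n ≥ 2 and 0 otherwise. -/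

import Mathlib

open Matrix

noncomputable def Umat : (n : ℕ) → (Fin n → ℝ) → Matrix (Fin (2 ^ n)) (Fin (2 ^ n)) ℂ
  | 0, _ => 1
  | n + 1, ξ =>
      (Matrix.reindex (finSumFinEquiv.trans (finCongr (by rw [pow_succ, mul_two])))
        (finSumFinEquiv.trans (finCongr (by rw [pow_succ, mul_two]))))
        (Matrix.fromBlocks (Umat n fun j => ξ j.castSucc) 0 0
          (Complex.exp (Complex.I * (ξ (Fin.last n) : ℂ)) • Umat n fun j => ξ j.castSucc))

/-- The recursively defined hopping matrix `M_n((a_j), (γ_{j,k}))`; only the entries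
`γ j k` with `j < k` are relevant. -/
noncomputable def Mmat : (n : ℕ) → (Fin n → ℂ) → (Fin n → Fin n → ℝ) →
    Matrix (Fin (2 ^ n)) (Fin (2 ^ n)) ℂ
  | 0, _, _ => 0
  | n + 1, a, γ =>
      (Matrix.reindex (finSumFinEquiv.trans (finCongr (by rw [pow_succ, mul_two])))
        (finSumFinEquiv.trans (finCongr (by rw [pow_succ, mul_two]))))
        (Matrix.fromBlocks
          (Mmat n (fun j => a j.castSucc) fun j k => γ j.castSucc k.castSucc)
          (a (Fin.last n) • Umat n fun j => γ j.castSucc (Fin.last n))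
          ((starRingEnd ℂ) (a (Fin.last n)) • (Umat n fun j => γ j.castSucc (Fin.last n))ᴴ)
          (Mmat n (fun j => a j.castSucc) fun j k => γ j.castSucc k.castSucc))

namespace MAux

def beqv (n : ℕ) : Fin (2 ^ n) ⊕ Fin (2 ^ n) ≃ Fin (2 ^ (n + 1)) :=
  finSumFinEquiv.trans (finCongr (by rw [pow_succ, mul_two]))

lemma Umat_succ (n : ℕ) (ξ : Fin (n + 1) → ℝ) :
    Umat (n + 1) ξ = (Matrix.reindex (beqv n) (beqv n))
      (Matrix.fromBlocks (Umat n fun j => ξ j.castSucc) 0 0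
        (Complex.exp (Complex.I * (ξ (Fin.last n) : ℂ)) • Umat n fun j => ξ j.castSucc)) := rfl

lemma Mmat_succ (n : ℕ) (a : Fin (n + 1) → ℂ) (γ : Fin (n + 1) → Fin (n + 1) → ℝ) :
    Mmat (n + 1) a γ = (Matrix.reindex (beqv n) (beqv n))
      (Matrix.fromBlocks
        (Mmat n (fun j => a j.castSucc) fun j k => γ j.castSucc k.castSucc)
        (a (Fin.last n) • Umat n fun j => γ j.castSucc (Fin.last n))
        ((starRingEnd ℂ) (a (Fin.last n)) • (Umat n fun j => γ j.castSucc (Fin.last n))ᴴ)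
        (Mmat n (fun j => a j.castSucc) fun j k => γ j.castSucc k.castSucc)) := rfl

lemma Umat_diag (n : ℕ) (ξ : Fin n → ℝ) :
    ∃ d : Fin (2 ^ n) → ℂ, (∀ i, ‖d i‖ = 1) ∧ Umat n ξ = Matrix.diagonal d := by
  induction n with
  | zero => exact ⟨fun _ => 1, fun _ => by simp, by simp [Umat]⟩
  | succ n ih =>
    obtain ⟨d, hd1, hd⟩ := ih fun j => ξ j.castSucc
    set c := Complex.exp (Complex.I * (ξ (Fin.last n) : ℂ)) with hc
    refine ⟨(Sum.elim d (c • d)) ∘ (beqv n).symm, ?_, ?_⟩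
    · intro i
      rcases h : (beqv n).symm i with j | j <;>
        simp [h, hd1, hc, Pi.smul_apply, _root_.map_mul, Complex.norm_exp]
    · rw [Umat_succ, hd, ← Matrix.diagonal_smul, Matrix.fromBlocks_diagonal,
        Matrix.reindex_apply, Matrix.submatrix_diagonal_equiv]

lemma Umat_mul_comm (n : ℕ) (ξ η : Fin n → ℝ) :
    Umat n ξ * Umat n η = Umat n η * Umat n ξ := by
  obtain ⟨d, _, hd⟩ := Umat_diag n ξ
  obtain ⟨e, _, he⟩ := Umat_diag n η
  rw [hd, he, Matrix.diagonal_mul_diagonal, Matrix.diagonal_mul_diagonal]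
  exact congrArg Matrix.diagonal (funext fun i => mul_comm _ _)

lemma Umat_conjT_mul_comm (n : ℕ) (ξ η : Fin n → ℝ) :
    (Umat n ξ)ᴴ * Umat n η = Umat n η * (Umat n ξ)ᴴ := by
  obtain ⟨d, _, hd⟩ := Umat_diag n ξ
  obtain ⟨e, _, he⟩ := Umat_diag n η
  rw [hd, he, Matrix.diagonal_conjTranspose, Matrix.diagonal_mul_diagonal,
    Matrix.diagonal_mul_diagonal]
  exact congrArg Matrix.diagonal (funext fun i => mul_comm _ _)

noncomputable def xp (n : ℕ) (v : EuclideanSpace ℂ (Fin (2 ^ (n + 1)))) :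
    EuclideanSpace ℂ (Fin (2 ^ n)) :=
  (WithLp.equiv 2 _).symm fun i => v (beqv n (Sum.inl i))

noncomputable def yp (n : ℕ) (v : EuclideanSpace ℂ (Fin (2 ^ (n + 1)))) :
    EuclideanSpace ℂ (Fin (2 ^ n)) :=
  (WithLp.equiv 2 _).symm fun i => v (beqv n (Sum.inr i))

lemma norm_sq_eucl {m : ℕ} (w : EuclideanSpace ℂ (Fin m)) : ‖w‖ ^ 2 = ∑ i, ‖w i‖ ^ 2 := by
  rw [EuclideanSpace.norm_eq, Real.sq_sqrt (Finset.sum_nonneg fun i _ => sq_nonneg _)]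

lemma norm_sq_split {n : ℕ} (v : EuclideanSpace ℂ (Fin (2 ^ (n + 1)))) :
    ‖v‖ ^ 2 = ‖xp n v‖ ^ 2 + ‖yp n v‖ ^ 2 := by
  rw [norm_sq_eucl, norm_sq_eucl, norm_sq_eucl,
    ← Fintype.sum_equiv (beqv n) (fun s => ‖v ((beqv n) s)‖ ^ 2) (fun i => ‖v i‖ ^ 2)
      (fun s => rfl), Fintype.sum_sum_type]
  rfl

lemma block_apply_x {n : ℕ} (A B C D : Matrix (Fin (2 ^ n)) (Fin (2 ^ n)) ℂ)
    (v : EuclideanSpace ℂ (Fin (2 ^ (n + 1)))) :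
    xp n (Matrix.toEuclideanLin ((Matrix.reindex (beqv n) (beqv n)) (Matrix.fromBlocks A B C D)) v)
      = Matrix.toEuclideanLin A (xp n v) + Matrix.toEuclideanLin B (yp n v) := by
  ext i
  simp [xp, yp, Matrix.toEuclideanLin_apply, Matrix.reindex_apply,
    Matrix.submatrix_mulVec_equiv, Matrix.fromBlocks_mulVec, Function.comp]
  rfl

lemma block_apply_y {n : ℕ} (A B C D : Matrix (Fin (2 ^ n)) (Fin (2 ^ n)) ℂ)
    (v : EuclideanSpace ℂ (Fin (2 ^ (n + 1)))) :
    yp n (Matrix.toEuclideanLin ((Matrix.reindex (beqv n) (beqv n)) (Matrix.fromBlocks A B C D)) v)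
      = Matrix.toEuclideanLin C (xp n v) + Matrix.toEuclideanLin D (yp n v) := by
  ext i
  simp [xp, yp, Matrix.toEuclideanLin_apply, Matrix.reindex_apply,
    Matrix.submatrix_mulVec_equiv, Matrix.fromBlocks_mulVec, Function.comp]
  rfl

lemma toEuclideanLin_mul {m : ℕ} (A B : Matrix (Fin m) (Fin m) ℂ)
    (v : EuclideanSpace ℂ (Fin m)) :
    Matrix.toEuclideanLin (A * B) v = Matrix.toEuclideanLin A (Matrix.toEuclideanLin B v) := by
  simp [Matrix.toEuclideanLin_apply, Matrix.mulVec_mulVec]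

lemma submatrix_add' {l o m₁ m₂ : Type*} [Fintype m₁] (A B : Matrix m₁ m₂ ℂ)
    (f : l → m₁) (g : o → m₂) :
    A.submatrix f g + B.submatrix f g = (A + B).submatrix f g := rfl

lemma toEuclideanLin_smul {m : ℕ} (c : ℂ) (A : Matrix (Fin m) (Fin m) ℂ)
    (v : EuclideanSpace ℂ (Fin m)) :
    Matrix.toEuclideanLin (c • A) v = c • Matrix.toEuclideanLin A v := by
  have := _root_.map_smul (Matrix.toEuclideanLin (𝕜 := ℂ) (m := Fin m) (n := Fin m)) c A
  rw [this]; rfl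

lemma diag_norm {m : ℕ} (d : Fin m → ℂ) (hd : ∀ i, ‖d i‖ = 1)
    (w : EuclideanSpace ℂ (Fin m)) :
    ‖Matrix.toEuclideanLin (Matrix.diagonal d) w‖ = ‖w‖ := by
  rw [EuclideanSpace.norm_eq, EuclideanSpace.norm_eq]
  congr 1
  refine Finset.sum_congr rfl fun i _ => ?_
  have : (Matrix.toEuclideanLin (Matrix.diagonal d) w) i = d i * w i := by
    simp [Matrix.toEuclideanLin_apply, Matrix.mulVec_diagonal]
  rw [this, norm_mul]
  simp [hd i]

lemma Unorm {n : ℕ} (ξ : Fin n → ℝ) (w : EuclideanSpace ℂ (Fin (2 ^ n))) :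
    ‖Matrix.toEuclideanLin (Umat n ξ) w‖ = ‖w‖ := by
  obtain ⟨d, hd1, hd⟩ := Umat_diag n ξ
  rw [hd, diag_norm d hd1]

lemma UnormH {n : ℕ} (ξ : Fin n → ℝ) (w : EuclideanSpace ℂ (Fin (2 ^ n))) :
    ‖Matrix.toEuclideanLin (Umat n ξ)ᴴ w‖ = ‖w‖ := by
  obtain ⟨d, hd1, hd⟩ := Umat_diag n ξ
  rw [hd, Matrix.diagonal_conjTranspose, diag_norm _ fun i => by
    simpa using hd1 i]

lemma abs_exp_I_real (θ : ℝ) : ‖Complex.exp (Complex.I * (θ : ℂ))‖ = 1 := by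
  simp [Complex.norm_exp]


lemma anti_mat (n : ℕ) (a : Fin (n + 1) → ℂ) (γ : Fin (n + 1) → Fin (n + 1) → ℝ)
    (ξ : Fin (n + 1) → ℝ) :
    Mmat (n + 1) a γ * Umat (n + 1) ξ + Umat (n + 1) ξ * Mmat (n + 1) a γ =
      (Matrix.reindex (beqv n) (beqv n)) (Matrix.fromBlocks
        (Mmat n (fun j => a j.castSucc) (fun j k => γ j.castSucc k.castSucc) *
            Umat n (fun j => ξ j.castSucc) +
          Umat n (fun j => ξ j.castSucc) *
            Mmat n (fun j => a j.castSucc) (fun j k => γ j.castSucc k.castSucc))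
        ((a (Fin.last n) * (1 + Complex.exp (Complex.I * (ξ (Fin.last n) : ℂ)))) •
          (Umat n (fun j => ξ j.castSucc) * Umat n (fun j => γ j.castSucc (Fin.last n))))
        (((starRingEnd ℂ) (a (Fin.last n)) *
            (1 + Complex.exp (Complex.I * (ξ (Fin.last n) : ℂ)))) •
          ((Umat n fun j => γ j.castSucc (Fin.last n))ᴴ * Umat n (fun j => ξ j.castSucc)))
        (Complex.exp (Complex.I * (ξ (Fin.last n) : ℂ)) •
          (Mmat n (fun j => a j.castSucc) (fun j k => γ j.castSucc k.castSucc) *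
              Umat n (fun j => ξ j.castSucc) +
            Umat n (fun j => ξ j.castSucc) *
              Mmat n (fun j => a j.castSucc) (fun j k => γ j.castSucc k.castSucc)))) := by
  rw [Mmat_succ, Umat_succ]
  simp only [Matrix.reindex_apply, Matrix.submatrix_mul_equiv]
  rw [submatrix_add']
  rw [Matrix.fromBlocks_multiply, Matrix.fromBlocks_multiply, Matrix.fromBlocks_add]
  simp only [Matrix.mul_zero, Matrix.zero_mul, add_zero, zero_add]
  have hB : (a (Fin.last n) • Umat n fun j => γ j.castSucc (Fin.last n)) *
        (Complex.exp (Complex.I * (ξ (Fin.last n) : ℂ)) • Umat n fun j => ξ j.castSucc) +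
        (Umat n fun j => ξ j.castSucc) * (a (Fin.last n) • Umat n fun j => γ j.castSucc (Fin.last n))
      = (a (Fin.last n) * (1 + Complex.exp (Complex.I * (ξ (Fin.last n) : ℂ)))) •
          ((Umat n fun j => ξ j.castSucc) * Umat n fun j => γ j.castSucc (Fin.last n)) := by
    simp only [Matrix.smul_mul, Matrix.mul_smul, smul_smul]
    rw [Umat_mul_comm n (fun j => γ j.castSucc (Fin.last n)) (fun j => ξ j.castSucc)]
    module
  have hC : ((starRingEnd ℂ) (a (Fin.last n)) • (Umat n fun j => γ j.castSucc (Fin.last n))ᴴ) *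
        (Umat n fun j => ξ j.castSucc) +
        (Complex.exp (Complex.I * (ξ (Fin.last n) : ℂ)) • Umat n fun j => ξ j.castSucc) *
          ((starRingEnd ℂ) (a (Fin.last n)) • (Umat n fun j => γ j.castSucc (Fin.last n))ᴴ)
      = ((starRingEnd ℂ) (a (Fin.last n)) * (1 + Complex.exp (Complex.I * (ξ (Fin.last n) : ℂ)))) •
          ((Umat n fun j => γ j.castSucc (Fin.last n))ᴴ * Umat n fun j => ξ j.castSucc) := by
    simp only [Matrix.smul_mul, Matrix.mul_smul, smul_smul]
    rw [← Umat_conjT_mul_comm n (fun j => γ j.castSucc (Fin.last n)) (fun j => ξ j.castSucc)]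
    module
  have hD : (Mmat n (fun j => a j.castSucc) fun j k => γ j.castSucc k.castSucc) *
        (Complex.exp (Complex.I * (ξ (Fin.last n) : ℂ)) • Umat n fun j => ξ j.castSucc) +
        (Complex.exp (Complex.I * (ξ (Fin.last n) : ℂ)) • Umat n fun j => ξ j.castSucc) *
          (Mmat n (fun j => a j.castSucc) fun j k => γ j.castSucc k.castSucc)
      = Complex.exp (Complex.I * (ξ (Fin.last n) : ℂ)) •
          ((Mmat n (fun j => a j.castSucc) fun j k => γ j.castSucc k.castSucc) *
              (Umat n fun j => ξ j.castSucc) +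
            (Umat n fun j => ξ j.castSucc) *
              (Mmat n (fun j => a j.castSucc) fun j k => γ j.castSucc k.castSucc)) := by
    simp only [Matrix.smul_mul, Matrix.mul_smul, smul_add]
  rw [hB, hC, hD]

lemma anti : ∀ (n : ℕ) (a : Fin n → ℂ) (γ : Fin n → Fin n → ℝ) (ξ : Fin n → ℝ)
    (y : EuclideanSpace ℂ (Fin (2 ^ n))),
    ‖Matrix.toEuclideanLin (Mmat n a γ * Umat n ξ + Umat n ξ * Mmat n a γ) y‖ ≤
      (∑ j, ‖a j‖ * ‖1 + Complex.exp (Complex.I * (ξ j : ℂ))‖) * ‖y‖ := by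
  intro n
  induction n with
  | zero => intro a γ ξ y; simp [Mmat]
  | succ n ih =>
    intro a γ ξ y
    set M := Mmat n (fun j => a j.castSucc) fun j k => γ j.castSucc k.castSucc with hM
    set U := Umat n (fun j => ξ j.castSucc) with hU
    set V := Umat n (fun j => γ j.castSucc (Fin.last n)) with hV
    set α := a (Fin.last n) with hα
    set c := Complex.exp (Complex.I * (ξ (Fin.last n) : ℂ)) with hc
    have hVU : V * U = U * V := Umat_mul_comm n _ _
    have hVHU : Vᴴ * U = U * Vᴴ := Umat_conjT_mul_comm n _ _
    rw [anti_mat]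
    set K := ∑ j : Fin n, ‖a j.castSucc‖ *
      ‖1 + Complex.exp (Complex.I * ((ξ j.castSucc : ℝ) : ℂ))‖ with hK
    have hK0 : 0 ≤ K := Finset.sum_nonneg fun j _ =>
      mul_nonneg (norm_nonneg _) (norm_nonneg _)
    set κ := ‖α‖ * ‖1 + c‖ with hκ
    have hκ0 : 0 ≤ κ := mul_nonneg (norm_nonneg _) (norm_nonneg _)
    have hsum : (∑ j : Fin (n+1), ‖a j‖ *
        ‖1 + Complex.exp (Complex.I * ((ξ j : ℝ) : ℂ))‖) = K + κ := by
      rw [Fin.sum_univ_castSucc]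
    rw [hsum]
    set x := xp n y with hx
    set z := yp n y with hz
    have hT : ∀ w, ‖Matrix.toEuclideanLin (M * U + U * M) w‖ ≤ K * ‖w‖ := fun w => ih _ _ _ w
    have hr1 : ‖Matrix.toEuclideanLin (M * U + U * M) x
          + Matrix.toEuclideanLin ((α * (1 + c)) • (U * V)) z‖
        ≤ K * ‖x‖ + κ * ‖z‖ := by
      refine (norm_add_le _ _).trans (add_le_add (hT x) ?_)
      rw [toEuclideanLin_smul, norm_smul, toEuclideanLin_mul, Unorm, Unorm]
      simp [_root_.map_mul, hκ]
    have hr2 : ‖Matrix.toEuclideanLin (((starRingEnd ℂ) α * (1 + c)) • (Vᴴ * U)) x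
          + Matrix.toEuclideanLin (c • (M * U + U * M)) z‖
        ≤ κ * ‖x‖ + K * ‖z‖ := by
      refine (norm_add_le _ _).trans (add_le_add ?_ ?_)
      · rw [toEuclideanLin_smul, norm_smul, toEuclideanLin_mul, UnormH, Unorm]
        simp [_root_.map_mul, hκ]
      · rw [toEuclideanLin_smul, norm_smul]
        simpa [hc, abs_exp_I_real] using hT z
    refine le_of_pow_le_pow_left₀ two_ne_zero
      (mul_nonneg (add_nonneg hK0 hκ0) (norm_nonneg _)) ?_
    rw [norm_sq_split, block_apply_x, block_apply_y, mul_pow, norm_sq_split y]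
    have hp : (0:ℝ) ≤ ‖x‖ := norm_nonneg _
    have hq : (0:ℝ) ≤ ‖z‖ := norm_nonneg _
    have h1 := hr1; have h2 := hr2
    nlinarith [sq_nonneg (‖x‖ - ‖z‖), sq_nonneg (‖x‖ + ‖z‖), mul_nonneg hK0 hκ0,
      norm_nonneg (Matrix.toEuclideanLin (M * U + U * M) x
        + Matrix.toEuclideanLin ((α * (1 + c)) • (U * V)) z),
      norm_nonneg (Matrix.toEuclideanLin (((starRingEnd ℂ) α * (1 + c)) • (Vᴴ * U)) x
        + Matrix.toEuclideanLin (c • (M * U + U * M)) z),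
      mul_nonneg hp hq, sq_nonneg (K*‖x‖ + κ*‖z‖), sq_nonneg (κ*‖x‖ + K*‖z‖)]

lemma inner_eucl_left {m : ℕ} (Msq : Matrix (Fin m) (Fin m) ℂ) (x z : EuclideanSpace ℂ (Fin m)) :
    (inner ℂ (Matrix.toEuclideanLin Msq x) z : ℂ) = inner ℂ x (Matrix.toEuclideanLin Msqᴴ z) := by
  rw [Matrix.toEuclideanLin_conjTranspose_eq_adjoint, LinearMap.adjoint_inner_right]

lemma Mherm : ∀ (n : ℕ) (a : Fin n → ℂ) (γ : Fin n → Fin n → ℝ), (Mmat n a γ)ᴴ = Mmat n a γ := by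
  intro n
  induction n with
  | zero => intro a γ; simp [Mmat]
  | succ n ih =>
    intro a γ
    have h1 : ((starRingEnd ℂ) (a (Fin.last n)) • (Umat n fun j => γ j.castSucc (Fin.last n))ᴴ)ᴴ = (a (Fin.last n)) • (Umat n fun j => γ j.castSucc (Fin.last n)) := by
      rw [Matrix.conjTranspose_smul, Matrix.conjTranspose_conjTranspose]
      simp
    have h2 : ((a (Fin.last n)) • (Umat n fun j => γ j.castSucc (Fin.last n)))ᴴ = (starRingEnd ℂ) (a (Fin.last n)) • (Umat n fun j => γ j.castSucc (Fin.last n))ᴴ := by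
      rw [Matrix.conjTranspose_smul]
      simp
    rw [Mmat_succ, Matrix.reindex_apply, Matrix.conjTranspose_submatrix,
      Matrix.fromBlocks_conjTranspose, h1, h2, ih]

lemma dsum_split {n : ℕ} (g : Fin (n + 1) → Fin (n + 1) → ℝ) :
    ∑ j : Fin (n + 1), ∑ k : Fin (n + 1), (if j < k then g j k else 0)
      = (∑ j : Fin n, ∑ k : Fin n, (if j < k then g j.castSucc k.castSucc else 0))
        + ∑ j : Fin n, g j.castSucc (Fin.last n) := by
  rw [Fin.sum_univ_castSucc]
  have h1 : (∑ k : Fin (n + 1), if Fin.last n < k then g (Fin.last n) k else 0) = 0 :=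
    Finset.sum_eq_zero fun k _ => if_neg (by simpa using not_lt.mpr (Fin.le_last k))
  rw [h1, add_zero, ← Finset.sum_add_distrib]
  refine Finset.sum_congr rfl fun j _ => ?_
  rw [Fin.sum_univ_castSucc]
  simp [Fin.castSucc_lt_castSucc_iff, Fin.castSucc_lt_last]

set_option maxHeartbeats 2000000 in
lemma main : ∀ (n : ℕ) (a : Fin n → ℂ) (γ : Fin n → Fin n → ℝ)
    (v : EuclideanSpace ℂ (Fin (2 ^ n))),
    ((∑ j, ‖a j‖ ^ 2) - (1 / 2) * ∑ j, ∑ k,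
        (if j < k then (‖a j‖ ^ 2 + ‖a k‖ ^ 2) *
          ‖1 + Complex.exp (Complex.I * (γ j k : ℂ))‖ else 0)) * ‖v‖ ^ 2
      ≤ ‖Matrix.toEuclideanLin (Mmat n a γ) v‖ ^ 2 := by
  intro n
  induction n with
  | zero => intro a γ v; simp [Mmat]
  | succ n ih =>
    intro a γ v
    have happ : ‖Matrix.toEuclideanLin (Mmat (n + 1) a γ) v‖ ^ 2
        = ‖Matrix.toEuclideanLin (Mmat n (fun j => a j.castSucc) fun j k => γ j.castSucc k.castSucc) (xp n v) + Matrix.toEuclideanLin ((a (Fin.last n)) • (Umat n fun j => γ j.castSucc (Fin.last n))) (yp n v)‖ ^ 2 + ‖Matrix.toEuclideanLin ((starRingEnd ℂ) (a (Fin.last n)) • (Umat n fun j => γ j.castSucc (Fin.last n))ᴴ) (xp n v) + Matrix.toEuclideanLin (Mmat n (fun j => a j.castSucc) fun j k => γ j.castSucc k.castSucc) (yp n v)‖ ^ 2 := by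
      rw [Mmat_succ, norm_sq_split, block_apply_x, block_apply_y]
    have hc1 : (inner ℂ (Matrix.toEuclideanLin (Mmat n (fun j => a j.castSucc) fun j k => γ j.castSucc k.castSucc) (xp n v)) (Matrix.toEuclideanLin ((a (Fin.last n)) • (Umat n fun j => γ j.castSucc (Fin.last n))) (yp n v)) : ℂ)
        = (a (Fin.last n)) * inner ℂ (xp n v) (Matrix.toEuclideanLin ((Mmat n (fun j => a j.castSucc) fun j k => γ j.castSucc k.castSucc) * (Umat n fun j => γ j.castSucc (Fin.last n))) (yp n v)) := by
      rw [toEuclideanLin_smul, inner_smul_right, inner_eucl_left, Mherm, ← toEuclideanLin_mul]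
    have hc2 : (inner ℂ (Matrix.toEuclideanLin ((starRingEnd ℂ) (a (Fin.last n)) • (Umat n fun j => γ j.castSucc (Fin.last n))ᴴ) (xp n v)) (Matrix.toEuclideanLin (Mmat n (fun j => a j.castSucc) fun j k => γ j.castSucc k.castSucc) (yp n v)) : ℂ)
        = (a (Fin.last n)) * inner ℂ (xp n v) (Matrix.toEuclideanLin ((Umat n fun j => γ j.castSucc (Fin.last n)) * (Mmat n (fun j => a j.castSucc) fun j k => γ j.castSucc k.castSucc)) (yp n v)) := by
      rw [toEuclideanLin_smul, inner_smul_left, Complex.conj_conj, inner_eucl_left,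
        Matrix.conjTranspose_conjTranspose, ← toEuclideanLin_mul]
    have hc3 : (inner ℂ (Matrix.toEuclideanLin (Mmat n (fun j => a j.castSucc) fun j k => γ j.castSucc k.castSucc) (xp n v)) (Matrix.toEuclideanLin ((a (Fin.last n)) • (Umat n fun j => γ j.castSucc (Fin.last n))) (yp n v)) : ℂ) + (inner ℂ (Matrix.toEuclideanLin ((starRingEnd ℂ) (a (Fin.last n)) • (Umat n fun j => γ j.castSucc (Fin.last n))ᴴ) (xp n v)) (Matrix.toEuclideanLin (Mmat n (fun j => a j.castSucc) fun j k => γ j.castSucc k.castSucc) (yp n v)) : ℂ)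
        = (a (Fin.last n)) * inner ℂ (xp n v)
            (Matrix.toEuclideanLin ((Mmat n (fun j => a j.castSucc) fun j k => γ j.castSucc k.castSucc) * (Umat n fun j => γ j.castSucc (Fin.last n)) + (Umat n fun j => γ j.castSucc (Fin.last n)) * (Mmat n (fun j => a j.castSucc) fun j k => γ j.castSucc k.castSucc)) (yp n v)) := by
      rw [hc1, hc2, _root_.map_add, LinearMap.add_apply, inner_add_right, mul_add]
    set P := ‖xp n v‖ with hP
    set Q := ‖yp n v‖ with hQ
    set Kn := ∑ j : Fin n, ‖a j.castSucc‖ *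
      ‖1 + Complex.exp (Complex.I * ((γ j.castSucc (Fin.last n) : ℝ) : ℂ))‖ with hKn
    have hKn0 : 0 ≤ Kn := Finset.sum_nonneg fun j _ =>
      mul_nonneg (norm_nonneg _) (norm_nonneg _)
    have hW : ‖Matrix.toEuclideanLin ((Mmat n (fun j => a j.castSucc) fun j k => γ j.castSucc k.castSucc) * (Umat n fun j => γ j.castSucc (Fin.last n)) + (Umat n fun j => γ j.castSucc (Fin.last n)) * (Mmat n (fun j => a j.castSucc) fun j k => γ j.castSucc k.castSucc)) (yp n v)‖ ≤ Kn * Q :=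
      anti n (fun j => a j.castSucc) (fun j k => γ j.castSucc k.castSucc)
        (fun j => γ j.castSucc (Fin.last n)) (yp n v)
    have habs : ‖(a (Fin.last n)) * inner ℂ (xp n v)
          (Matrix.toEuclideanLin ((Mmat n (fun j => a j.castSucc) fun j k => γ j.castSucc k.castSucc) * (Umat n fun j => γ j.castSucc (Fin.last n)) + (Umat n fun j => γ j.castSucc (Fin.last n)) * (Mmat n (fun j => a j.castSucc) fun j k => γ j.castSucc k.castSucc)) (yp n v))‖
        ≤ ‖a (Fin.last n)‖ * (Kn * (P * Q)) := by
      rw [norm_mul]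
      refine mul_le_mul_of_nonneg_left ?_ (norm_nonneg _)
      calc ‖inner ℂ (xp n v)
            (Matrix.toEuclideanLin ((Mmat n (fun j => a j.castSucc) fun j k => γ j.castSucc k.castSucc) * (Umat n fun j => γ j.castSucc (Fin.last n)) + (Umat n fun j => γ j.castSucc (Fin.last n)) * (Mmat n (fun j => a j.castSucc) fun j k => γ j.castSucc k.castSucc)) (yp n v))‖
          ≤ P * ‖Matrix.toEuclideanLin ((Mmat n (fun j => a j.castSucc) fun j k => γ j.castSucc k.castSucc) * (Umat n fun j => γ j.castSucc (Fin.last n)) + (Umat n fun j => γ j.castSucc (Fin.last n)) * (Mmat n (fun j => a j.castSucc) fun j k => γ j.castSucc k.castSucc)) (yp n v)‖ :=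
            norm_inner_le_norm (𝕜 := ℂ) _ _
        _ ≤ P * (Kn * Q) := mul_le_mul_of_nonneg_left hW (norm_nonneg _)
        _ = Kn * (P * Q) := by ring
    have hre : -(‖a (Fin.last n)‖ * (Kn * (P * Q)))
        ≤ ((inner ℂ (Matrix.toEuclideanLin (Mmat n (fun j => a j.castSucc) fun j k => γ j.castSucc k.castSucc) (xp n v)) (Matrix.toEuclideanLin ((a (Fin.last n)) • (Umat n fun j => γ j.castSucc (Fin.last n))) (yp n v)) : ℂ)).re + ((inner ℂ (Matrix.toEuclideanLin ((starRingEnd ℂ) (a (Fin.last n)) • (Umat n fun j => γ j.castSucc (Fin.last n))ᴴ) (xp n v)) (Matrix.toEuclideanLin (Mmat n (fun j => a j.castSucc) fun j k => γ j.castSucc k.castSucc) (yp n v)) : ℂ)).re := by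
      have habs2 := abs_le.1 (Complex.abs_re_le_norm ((a (Fin.last n)) *
        inner ℂ (xp n v) (Matrix.toEuclideanLin ((Mmat n (fun j => a j.castSucc) fun j k => γ j.castSucc k.castSucc) * (Umat n fun j => γ j.castSucc (Fin.last n)) + (Umat n fun j => γ j.castSucc (Fin.last n)) * (Mmat n (fun j => a j.castSucc) fun j k => γ j.castSucc k.castSucc)) (yp n v))))
      rw [← Complex.add_re, hc3]
      linarith [habs, habs2.1]
    have hBy : ‖Matrix.toEuclideanLin ((a (Fin.last n)) • (Umat n fun j => γ j.castSucc (Fin.last n))) (yp n v)‖ = ‖a (Fin.last n)‖ * Q := by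
      rw [toEuclideanLin_smul, norm_smul, Unorm]
    have hCx : ‖Matrix.toEuclideanLin ((starRingEnd ℂ) (a (Fin.last n)) • (Umat n fun j => γ j.castSucc (Fin.last n))ᴴ) (xp n v)‖ = ‖a (Fin.last n)‖ * P := by
      rw [toEuclideanLin_smul, norm_smul, UnormH]
      simp [hP]
    have e1 : ‖Matrix.toEuclideanLin (Mmat n (fun j => a j.castSucc) fun j k => γ j.castSucc k.castSucc) (xp n v) + Matrix.toEuclideanLin ((a (Fin.last n)) • (Umat n fun j => γ j.castSucc (Fin.last n))) (yp n v)‖ ^ 2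
        = ‖Matrix.toEuclideanLin (Mmat n (fun j => a j.castSucc) fun j k => γ j.castSucc k.castSucc) (xp n v)‖ ^ 2 + 2 * ((inner ℂ (Matrix.toEuclideanLin (Mmat n (fun j => a j.castSucc) fun j k => γ j.castSucc k.castSucc) (xp n v)) (Matrix.toEuclideanLin ((a (Fin.last n)) • (Umat n fun j => γ j.castSucc (Fin.last n))) (yp n v)) : ℂ)).re + (‖a (Fin.last n)‖ * Q) ^ 2 := by
      rw [← hBy]
      exact norm_add_sq (𝕜 := ℂ) (Matrix.toEuclideanLin (Mmat n (fun j => a j.castSucc) fun j k => γ j.castSucc k.castSucc) (xp n v)) (Matrix.toEuclideanLin ((a (Fin.last n)) • (Umat n fun j => γ j.castSucc (Fin.last n))) (yp n v))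
    have e2 : ‖Matrix.toEuclideanLin ((starRingEnd ℂ) (a (Fin.last n)) • (Umat n fun j => γ j.castSucc (Fin.last n))ᴴ) (xp n v) + Matrix.toEuclideanLin (Mmat n (fun j => a j.castSucc) fun j k => γ j.castSucc k.castSucc) (yp n v)‖ ^ 2
        = (‖a (Fin.last n)‖ * P) ^ 2 + 2 * ((inner ℂ (Matrix.toEuclideanLin ((starRingEnd ℂ) (a (Fin.last n)) • (Umat n fun j => γ j.castSucc (Fin.last n))ᴴ) (xp n v)) (Matrix.toEuclideanLin (Mmat n (fun j => a j.castSucc) fun j k => γ j.castSucc k.castSucc) (yp n v)) : ℂ)).re + ‖Matrix.toEuclideanLin (Mmat n (fun j => a j.castSucc) fun j k => γ j.castSucc k.castSucc) (yp n v)‖ ^ 2 := by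
      rw [← hCx]
      exact norm_add_sq (𝕜 := ℂ) (Matrix.toEuclideanLin ((starRingEnd ℂ) (a (Fin.last n)) • (Umat n fun j => γ j.castSucc (Fin.last n))ᴴ) (xp n v)) (Matrix.toEuclideanLin (Mmat n (fun j => a j.castSucc) fun j k => γ j.castSucc k.castSucc) (yp n v))
    have h1 := ih (fun j => a j.castSucc) (fun j k => γ j.castSucc k.castSucc) (xp n v)
    have h2 := ih (fun j => a j.castSucc) (fun j k => γ j.castSucc k.castSucc) (yp n v)
    set Sn := ∑ j : Fin n, ‖a j.castSucc‖ ^ 2 with hSn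
    set Dn := ∑ j : Fin n, ∑ k : Fin n, (if j < k then
      (‖a j.castSucc‖ ^ 2 + ‖a k.castSucc‖ ^ 2) *
        ‖1 + Complex.exp (Complex.I * ((γ j.castSucc k.castSucc : ℝ) : ℂ))‖ else 0)
      with hDn
    set En := ∑ j : Fin n, (‖a j.castSucc‖ ^ 2 + ‖a (Fin.last n)‖ ^ 2) *
      ‖1 + Complex.exp (Complex.I * ((γ j.castSucc (Fin.last n) : ℝ) : ℂ))‖ with hEn
    have hEn0 : 0 ≤ En := Finset.sum_nonneg fun j _ =>
      mul_nonneg (by positivity) (norm_nonneg _)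
    have hF1 : (∑ j : Fin (n + 1), ‖a j‖ ^ 2) = Sn + ‖a (Fin.last n)‖ ^ 2 :=
      Fin.sum_univ_castSucc _
    have hF2 : (∑ j : Fin (n + 1), ∑ k : Fin (n + 1), (if j < k then
          (‖a j‖ ^ 2 + ‖a k‖ ^ 2) *
            ‖1 + Complex.exp (Complex.I * ((γ j k : ℝ) : ℂ))‖ else 0))
        = Dn + En :=
      dsum_split _
    have hF3 : ‖a (Fin.last n)‖ * Kn ≤ En / 2 := by
      rw [hKn, hEn, Finset.mul_sum, Finset.sum_div]
      refine Finset.sum_le_sum fun j _ => ?_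
      have hc0 : (0:ℝ) ≤ ‖1 + Complex.exp (Complex.I *
        ((γ j.castSucc (Fin.last n) : ℝ) : ℂ))‖ := norm_nonneg _
      nlinarith [sq_nonneg (‖a (Fin.last n)‖ - ‖a j.castSucc‖),
        norm_nonneg (a (Fin.last n)), norm_nonneg (a j.castSucc)]
    have hv2 : ‖v‖ ^ 2 = P ^ 2 + Q ^ 2 := norm_sq_split v
    rw [happ, e1, e2, hF1, hF2, hv2]
    have hP0 : 0 ≤ P := norm_nonneg _
    have hQ0 : 0 ≤ Q := norm_nonneg _
    nlinarith [mul_nonneg hEn0 (sq_nonneg (P - Q)), mul_nonneg hP0 hQ0,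
      mul_nonneg (mul_nonneg (norm_nonneg (a (Fin.last n))) hKn0) (mul_nonneg hP0 hQ0),
      mul_nonneg (mul_nonneg hP0 hQ0) (sub_nonneg.mpr hF3)]

end MAux

set_option maxHeartbeats 1000000 in
/-- Lemma 2.2 (4): a lower bound on `inf_{‖v‖=1} ‖M_n((a_j),(γ_{j,k})) v‖²` in terms of the
maximum over `m` of the row sums `Σ_{j<m}|1+e^{iγ_{j,m}}| + Σ_{j>m}|1+e^{iγ_{m,j}}|`. -/
theorem Mmat_inf_sq_ge' (n : ℕ) (hn : 1 ≤ n) (a : Fin n → ℂ) (γ : Fin n → Fin n → ℝ) :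
    (1 - (if 2 ≤ n then (1 : ℝ) else 0) * (1 / 2) *
          ⨆ m : Fin n,
            ((∑ j : Fin n,
                if j < m then ‖1 + Complex.exp (Complex.I * (γ j m : ℂ))‖ else 0) +
              ∑ j : Fin n,
                if m < j then ‖1 + Complex.exp (Complex.I * (γ m j : ℂ))‖ else 0)) *
        (∑ j : Fin n, ‖a j‖ ^ 2) ≤
      sInf {r : ℝ | ∃ v : EuclideanSpace ℂ (Fin (2 ^ n)),
        ‖v‖ = 1 ∧ r = ‖Matrix.toEuclideanLin (Mmat n a γ) v‖ ^ 2} := by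
  set c : Fin n → Fin n → ℝ := fun j k => ‖1 + Complex.exp (Complex.I * (γ j k : ℂ))‖
    with hc
  set R : Fin n → ℝ := fun m =>
    (∑ j : Fin n, if j < m then c j m else 0) + ∑ j : Fin n, if m < j then c m j else 0 with hR
  set W : ℝ := (if 2 ≤ n then (1 : ℝ) else 0) * (1 / 2) * ⨆ m : Fin n, R m with hW
  set Sa : ℝ := ∑ j : Fin n, ‖a j‖ ^ 2 with hSa
  set D : ℝ := ∑ j : Fin n, ∑ k : Fin n,
    (if j < k then (‖a j‖ ^ 2 + ‖a k‖ ^ 2) * c j k else 0) with hD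
  have hSa0 : 0 ≤ Sa := Finset.sum_nonneg fun j _ => sq_nonneg _
  have hhalf : (1 / 2) * D ≤ W * Sa := by
    by_cases h2 : 2 ≤ n
    · have hDeq : D = ∑ m : Fin n, ‖a m‖ ^ 2 * R m := by
        have e1 : ∀ j k : Fin n,
            (if j < k then (‖a j‖ ^ 2 + ‖a k‖ ^ 2) * c j k else 0)
              = ‖a j‖ ^ 2 * (if j < k then c j k else 0)
                + ‖a k‖ ^ 2 * (if j < k then c j k else 0) := by
          intro j k; split <;> ring
        calc D = ∑ j : Fin n, ∑ k : Fin n,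
              (‖a j‖ ^ 2 * (if j < k then c j k else 0)
                + ‖a k‖ ^ 2 * (if j < k then c j k else 0)) :=
            Finset.sum_congr rfl fun j _ => Finset.sum_congr rfl fun k _ => e1 j k
          _ = (∑ j : Fin n, ∑ k : Fin n, ‖a j‖ ^ 2 * (if j < k then c j k else 0))
              + ∑ j : Fin n, ∑ k : Fin n,
                  ‖a k‖ ^ 2 * (if j < k then c j k else 0) := by
            rw [← Finset.sum_add_distrib]
            exact Finset.sum_congr rfl fun j _ => Finset.sum_add_distrib
          _ = (∑ m : Fin n, ‖a m‖ ^ 2 * ∑ k : Fin n, (if m < k then c m k else 0))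
              + ∑ m : Fin n, ‖a m‖ ^ 2 * ∑ j : Fin n, (if j < m then c j m else 0) := by
            rw [Finset.sum_comm (s := Finset.univ) (t := Finset.univ)
              (f := fun j k => ‖a k‖ ^ 2 * (if j < k then c j k else 0))]
            congr 1 <;> exact Finset.sum_congr rfl fun m _ => (Finset.mul_sum _ _ _).symm
          _ = ∑ m : Fin n, ‖a m‖ ^ 2 * R m := by
            rw [← Finset.sum_add_distrib]
            exact Finset.sum_congr rfl fun m _ => by rw [hR]; ring
      have hne : Nonempty (Fin n) := ⟨⟨0, by omega⟩⟩
      have hbdd : BddAbove (Set.range R) := Finite.bddAbove_range R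
      have hDle : D ≤ (⨆ m : Fin n, R m) * Sa := by
        rw [hDeq, hSa, mul_comm ((⨆ m : Fin n, R m)) _, Finset.sum_mul]
        exact Finset.sum_le_sum fun m _ =>
          mul_le_mul_of_nonneg_left (le_ciSup hbdd m) (sq_nonneg _)
      rw [hW, if_pos h2]
      nlinarith [hDle]
    · have hn1 : n = 1 := by omega
      subst hn1
      have hD0 : D = 0 := by
        rw [hD]
        refine Finset.sum_eq_zero fun j _ => Finset.sum_eq_zero fun k _ => if_neg ?_
        omega
      rw [hW, if_neg h2, hD0]
      simp
  have hpos : 0 < 2 ^ n := pow_pos (by norm_num) n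
  have hne : Nonempty (Fin (2 ^ n)) := ⟨⟨0, hpos⟩⟩
  set v0 : EuclideanSpace ℂ (Fin (2 ^ n)) := EuclideanSpace.single ⟨0, hpos⟩ (1 : ℂ) with hv0
  have hv0n : ‖v0‖ = 1 := by rw [hv0, EuclideanSpace.norm_single, norm_one]
  refine le_csInf ⟨‖Matrix.toEuclideanLin (Mmat n a γ) v0‖ ^ 2, v0, hv0n, rfl⟩ ?_
  rintro r ⟨v, hv, rfl⟩
  have hmain := MAux.main n a γ v
  rw [hv] at hmain
  calc (1 - W) * Sa ≤ Sa - (1 / 2) * D := by nlinarith [hhalf]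
    _ ≤ ‖Matrix.toEuclideanLin (Mmat n a γ) v‖ ^ 2 := by
        simpa [hSa, hD, hc] using hmain
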